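/- Let A be an associative unital ring and let x, h, y ∈ A satisfy the sl(2) commutation relations ⁅h,x⁆ = 2x, ⁅x,y⁆ = h, ⁅h,y⁆ = −2y, where ⁅a,b⁆ := a*b − b*a. Then for every integer k ≥ 1 there exists an element F belonging to the subring of A generated by {x, h, y} such that ⁅x^k, y^k⁆ = (−1)^(k+1) · k! · (h · (h+1) · (h+2) ⋯ (h+(k−1))) + x · F, where h+i denotes h + i·1. -/
import Mathlib

section sl2Aux

variable {A : Type*} [Ring A] (x h y : A)

private lemma sl2_cast_mul_eq_nsmul (n : ℕ) (a : A) : (n : A) * a = n • a :=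
  (nsmul_eq_mul n a).symm

private lemma sl2_mul_cast_eq_nsmul (n : ℕ) (a : A) : a * (n : A) = n • a := by
  rw [← (Nat.cast_commute n a).eq, nsmul_eq_mul]

/-- Move `h` to the right through powers of `x`. -/
lemma sl2_h_pow_x (hhx : h * x - x * h = 2 * x) :
    ∀ k : ℕ, h * x ^ k = x ^ k * h + (2 * k) • x ^ k := by
  have hx : h * x = x * h + 2 • x := by
    rw [two_smul]; linear_combination (norm := noncomm_ring) hhx
  intro k
  induction k with
  | zero => simp
  | succ k ih =>
    rw [pow_succ']
    calc h * (x * x ^ k) = (h * x) * x ^ k := by rw [mul_assoc]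
      _ = (x * h + 2 • x) * x ^ k := by rw [hx]
      _ = x * (h * x ^ k) + 2 • (x * x ^ k) := by
          simp only [add_mul, smul_mul_assoc, mul_assoc]
      _ = x * (x ^ k * h + (2 * k) • x ^ k) + 2 • (x * x ^ k) := by rw [ih]
      _ = (x * x ^ k) * h + (2 * (k + 1)) • (x * x ^ k) := by
          simp only [mul_add, mul_smul_comm, mul_assoc]
          module

/-- Move `h` to the right through powers of `y`. -/
lemma sl2_h_pow_y (hhy : h * y - y * h = -(2 * y)) :
    ∀ k : ℕ, h * y ^ k = y ^ k * h - (2 * k) • y ^ k := by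
  have hy : h * y = y * h - 2 • y := by
    rw [two_smul]; linear_combination (norm := noncomm_ring) hhy
  intro k
  induction k with
  | zero => simp
  | succ k ih =>
    rw [pow_succ']
    calc h * (y * y ^ k) = (h * y) * y ^ k := by rw [mul_assoc]
      _ = (y * h - 2 • y) * y ^ k := by rw [hy]
      _ = y * (h * y ^ k) - 2 • (y * y ^ k) := by
          simp only [sub_mul, smul_mul_assoc, mul_assoc]
      _ = y * (y ^ k * h - (2 * k) • y ^ k) - 2 • (y * y ^ k) := by rw [ih]
      _ = (y * y ^ k) * h - (2 * (k + 1)) • (y * y ^ k) := by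
          simp only [mul_sub, mul_smul_comm, mul_assoc]
          module

/-- Move `x` to the right through powers of `y`. -/
lemma sl2_x_pow_y (hxy : x * y - y * x = h) (hhy : h * y - y * h = -(2 * y)) :
    ∀ k : ℕ, x * y ^ (k + 1)
      = y ^ (k + 1) * x + (k + 1) • (y ^ k * h) - (k * (k + 1)) • y ^ k := by
  have hxy' : x * y = y * x + h := by linear_combination (norm := noncomm_ring) hxy
  intro k
  induction k with
  | zero => simpa using hxy'
  | succ k ih =>
    calc x * y ^ (k + 2) = (x * y) * y ^ (k + 1) := by
          rw [pow_succ' y (k + 1), ← mul_assoc]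
      _ = (y * x + h) * y ^ (k + 1) := by rw [hxy']
      _ = y * (x * y ^ (k + 1)) + h * y ^ (k + 1) := by
          simp only [add_mul, mul_assoc]
      _ = y * (y ^ (k + 1) * x + (k + 1) • (y ^ k * h) - (k * (k + 1)) • y ^ k)
            + (y ^ (k + 1) * h - (2 * (k + 1)) • y ^ (k + 1)) := by
          rw [ih, sl2_h_pow_y h y hhy (k + 1)]
      _ = y ^ (k + 2) * x + (k + 2) • (y ^ (k + 1) * h) - ((k + 1) * (k + 2)) • y ^ (k + 1) := by
          simp only [pow_succ', mul_add, mul_sub, mul_smul_comm, smul_mul_assoc, mul_assoc]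
          module

/-- The key induction: `y^k x^k = (-1)^k k! (h)(h+1)⋯(h+k-1) + x F` with `F` in the
subring generated by `x, h, y`. -/
lemma sl2_yx_pow (hhx : h * x - x * h = 2 * x) (hxy : x * y - y * x = h)
    (hhy : h * y - y * h = -(2 * y)) :
    ∀ k : ℕ, ∃ F ∈ Subring.closure ({x, h, y} : Set A),
      y ^ k * x ^ k = (-1 : A) ^ k * (Nat.factorial k : A) *
        (((List.range k).map (fun i : ℕ => h + (i : A))).prod) + x * F := by
  intro k
  induction k with
  | zero => exact ⟨0, Subring.zero_mem _, by simp⟩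
  | succ k ih =>
    obtain ⟨F, hF, hEq⟩ := ih
    set S := Subring.closure ({x, h, y} : Set A) with hS
    have hxS : x ∈ S := Subring.subset_closure (by simp)
    have hhS : h ∈ S := Subring.subset_closure (by simp)
    have hyS : y ∈ S := Subring.subset_closure (by simp)
    set Q : A := ((List.range k).map (fun i : ℕ => h + (i : A))).prod with hQ
    refine ⟨y ^ (k + 1) * x ^ k - (k + 1) • (F * h) - (2 * k * (k + 1)) • F
        + (k * (k + 1)) • F, ?_, ?_⟩
    · exact Subring.add_mem _
        (Subring.sub_mem _
          (Subring.sub_mem _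
            (Subring.mul_mem _ (Subring.pow_mem _ hyS _) (Subring.pow_mem _ hxS _))
            (nsmul_mem (Subring.mul_mem _ hF hhS) _))
          (nsmul_mem hF _))
        (nsmul_mem hF _)
    · have e2 : y ^ (k + 1) * x
          = x * y ^ (k + 1) - (k + 1) • (y ^ k * h) + (k * (k + 1)) • y ^ k := by
        rw [sl2_x_pow_y x h y hxy hhy k]
        abel
      have e5 : (y ^ k * h) * x ^ k = (y ^ k * x ^ k) * h + (2 * k) • (y ^ k * x ^ k) := by
        calc (y ^ k * h) * x ^ k = y ^ k * (h * x ^ k) := by rw [mul_assoc]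
          _ = y ^ k * (x ^ k * h + (2 * k) • x ^ k) := by rw [sl2_h_pow_x x h hhx k]
          _ = (y ^ k * x ^ k) * h + (2 * k) • (y ^ k * x ^ k) := by
              simp only [mul_add, mul_smul_comm, mul_assoc]
      have eP : (((List.range (k + 1)).map (fun i : ℕ => h + (i : A))).prod)
          = Q * (h + (k : A)) := by
        rw [hQ, List.range_succ, List.map_append, List.prod_append]
        simp
      calc y ^ (k + 1) * x ^ (k + 1)
          = (y ^ (k + 1) * x) * x ^ k := by rw [pow_succ' x k, ← mul_assoc]
        _ = x * (y ^ (k + 1) * x ^ k) - (k + 1) • ((y ^ k * h) * x ^ k)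
              + (k * (k + 1)) • (y ^ k * x ^ k) := by
            rw [e2]
            simp only [sub_mul, add_mul, smul_mul_assoc, mul_assoc]
        _ = x * (y ^ (k + 1) * x ^ k)
              - (k + 1) • ((y ^ k * x ^ k) * h + (2 * k) • (y ^ k * x ^ k))
              + (k * (k + 1)) • (y ^ k * x ^ k) := by rw [e5]
        _ = x * (y ^ (k + 1) * x ^ k)
              - (k + 1) • (((-1 : A) ^ k * (Nat.factorial k : A) * Q + x * F) * h
                  + (2 * k) • ((-1 : A) ^ k * (Nat.factorial k : A) * Q + x * F))
              + (k * (k + 1)) • ((-1 : A) ^ k * (Nat.factorial k : A) * Q + x * F) := by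
            rw [hEq]
        _ = (-1 : A) ^ (k + 1) * ((k + 1).factorial : A) *
              (((List.range (k + 1)).map (fun i : ℕ => h + (i : A))).prod)
              + x * (y ^ (k + 1) * x ^ k - (k + 1) • (F * h) - (2 * k * (k + 1)) • F
                  + (k * (k + 1)) • F) := by
            rw [eP, pow_succ (-1 : A) k, Nat.factorial_succ, Nat.cast_mul]
            simp only [mul_add, add_mul, mul_sub, sub_mul, smul_mul_assoc, mul_smul_comm,
              mul_assoc, mul_neg, neg_mul, mul_one, one_mul, smul_add, smul_sub, smul_smul,
              sl2_cast_mul_eq_nsmul, sl2_mul_cast_eq_nsmul]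
            module

end sl2Aux

/-- The `sl(2)` identity of the proof of Theorem 7.2: in an associative unital ring, if
`x, h, y` form an `sl(2)` triple (with commutator `⁅a,b⁆ = a*b - b*a`), then for every `k ≥ 1`
there is an element `F` of the subring generated by `{x, h, y}` with
`⁅x^k, y^k⁆ = (-1)^(k+1) * k! * (h*(h+1)*⋯*(h+(k-1))) + x * F`. -/
theorem sl2_commutator_pow_pow {A : Type*} [Ring A] (x h y : A)
    (hhx : h * x - x * h = 2 * x)
    (hxy : x * y - y * x = h)
    (hhy : h * y - y * h = -(2 * y)) :
    ∀ k : ℕ, 1 ≤ k →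
      ∃ F ∈ Subring.closure ({x, h, y} : Set A),
        x ^ k * y ^ k - y ^ k * x ^ k
          = (-1 : A) ^ (k + 1) * (Nat.factorial k : A) *
              (((List.range k).map (fun i : ℕ => h + (i : A))).prod) + x * F := by
  intro k hk
  obtain ⟨m, rfl⟩ := Nat.exists_eq_add_of_le hk
  obtain ⟨F, hF, hEq⟩ := sl2_yx_pow x h y hhx hxy hhy (1 + m)
  set S := Subring.closure ({x, h, y} : Set A) with hS
  have hxS : x ∈ S := Subring.subset_closure (by simp)
  have hyS : y ∈ S := Subring.subset_closure (by simp)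
  refine ⟨x ^ m * y ^ (1 + m) - F, Subring.sub_mem _
    (Subring.mul_mem _ (Subring.pow_mem _ hxS _) (Subring.pow_mem _ hyS _)) hF, ?_⟩
  have e1 : x ^ (1 + m) * y ^ (1 + m) = x * (x ^ m * y ^ (1 + m)) := by
    rw [pow_add, pow_one, mul_assoc]
  rw [e1, hEq, pow_succ]
  noncomm_ring
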